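/- Let K contain the rationals and let L be the three-dimensional Leibniz 3-algebra with basis {e_1,e_2,e_3} and ternary bracket [e_1,e_1,e_2] = α e_1, [e_2,e_1,e_2] = −α e_2, [e_3,e_1,e_2] = β e_3 (α, β nonzero scalars) and zero otherwise. Then L is perfect, but the Leibniz algebra L⊗L (with the Daletskii–Takhtajan bracket) is not perfect: e_1⊗e_2 is not in the span of the commutators [e_i⊗e_j, e_k⊗e_l]. -/

import Mathlib

open Function TensorProduct

section Prelude

variable {L : Type*}

/-- The nested (iterated) bracket: `nestBr b k` is the `k*(n-1)+1`-ary operation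
`ω_p(a_1,…,a_p) = b(a_1,…,a_{n-1}, nestBr b (k-1) (a_n,…,a_p))`. -/
def nestBr {n : ℕ} (b : (Fin n → L) → L) : (k : ℕ) → (Fin (k * (n - 1) + 1) → L) → L
  | 0, a => a ⟨0, Nat.succ_pos _⟩
  | k + 1, a =>
    b fun j : Fin n =>
      if h : (j : ℕ) < n - 1 then
        a ⟨(j : ℕ),
          Nat.lt_succ_of_lt (lt_of_lt_of_le h (Nat.le_mul_of_pos_left _ (Nat.succ_pos k)))⟩
      else
        nestBr b k fun i =>
          a ⟨(n - 1) + (i : ℕ), by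
            have h1 : (k + 1) * (n - 1) + 1 = (n - 1) + (k * (n - 1) + 1) := by ring
            rw [h1]
            exact Nat.add_lt_add_left i.isLt _⟩

/-- `f` is a derivation with respect to the `n`-linear operation `b`. -/
def IsNDeriv {n : ℕ} [AddCommMonoid L] (b : (Fin n → L) → L) (f : L → L) : Prop :=
  ∀ a : Fin n → L, f (b a) = ∑ i, b (Function.update a i (f (a i)))

/-- The fundamental identity of Leibniz `n`-algebras:
`[[x_1,…,x_n],y_2,…,y_n] = Σ_i [x_1,…,[x_i,y_2,…,y_n],…,x_n]`
(the entries `y 1, …, y (n-1)` play the role of `y_2,…,y_n`). -/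
def FundId {n : ℕ} [NeZero n] [AddCommMonoid L] (b : (Fin n → L) → L) : Prop :=
  ∀ x y : Fin n → L,
    b (Function.update y 0 (b x)) =
      ∑ i, b (Function.update x i (b (Function.update y 0 (x i))))

/-- The right-nested bracket `[x_1,[x_2,…,[x_m,x_{m+1}]…]]` built from a binary bracket. -/
def nested2 (b : L → L → L) : (m : ℕ) → (Fin (m + 1) → L) → L
  | 0, a => a 0
  | m + 1, a => b (a 0) (nested2 b m fun i => a i.succ)

end Prelude

/-- over a field containing ℚ, the 3-dimensional perfect Leibniz 3-algebra
with `[e_1,e_1,e_2]=αe_1`, `[e_2,e_1,e_2]=-αe_2`, `[e_3,e_1,e_2]=βe_3` (zero otherwise,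
`α,β ≠ 0`) is perfect, but `L⊗L` with the Daletskii–Takhtajan bracket is not perfect:
`e_1⊗e_2` is not in the span of the commutators `[e_i⊗e_j, e_k⊗e_l]`. -/
theorem dim3_leibniz3_not_perfect_tensor {K L : Type*} [Field K] [CharZero K]
    [AddCommGroup L] [Module K L]
    (b : MultilinearMap K (fun _ : Fin 3 => L) L) (hFI : FundId ⇑b)
    (e : Module.Basis (Fin 3) K L) (α β : K) (hα : α ≠ 0) (hβ : β ≠ 0)
    (h1 : b ![e 0, e 0, e 1] = α • e 0)
    (h2 : b ![e 1, e 0, e 1] = - (α • e 1))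
    (h3 : b ![e 2, e 0, e 1] = β • e 2)
    (hzero : ∀ i j k : Fin 3, ¬(j = 0 ∧ k = 1) → b ![e i, e j, e k] = 0) :
    Submodule.span K (Set.range fun a : Fin 3 → L => b a) = ⊤ ∧
    ∀ B : L ⊗[K] L →ₗ[K] L ⊗[K] L →ₗ[K] L ⊗[K] L,
      (∀ x y z w : L, B (x ⊗ₜ[K] y) (z ⊗ₜ[K] w) =
        b ![x, z, w] ⊗ₜ[K] y + x ⊗ₜ[K] b ![y, z, w]) →
      e 0 ⊗ₜ[K] e 1 ∉
        Submodule.span K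
          {t : L ⊗[K] L | ∃ i j k l : Fin 3, t = B (e i ⊗ₜ[K] e j) (e k ⊗ₜ[K] e l)} ∧
      Submodule.span K {t : L ⊗[K] L | ∃ u v, t = B u v} ≠ ⊤ := by
  classical
  have hb : ∀ i : Fin 3, b ![e i, e 0, e 1] = (![α, -α, β] i) • e i := by
    intro i
    fin_cases i <;> simp [h1, h2, h3]
  constructor
  · rw [eq_top_iff, ← e.span_eq]
    apply Submodule.span_le.2
    rintro _ ⟨i, rfl⟩
    have hmem : b ![e i, e 0, e 1] ∈
        Submodule.span K (Set.range fun a : Fin 3 → L => b a) :=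
      Submodule.subset_span ⟨![e i, e 0, e 1], rfl⟩
    have hci : (![α, -α, β] i) ≠ 0 := by
      fin_cases i <;> simpa
    have heq : e i = (![α, -α, β] i)⁻¹ • b ![e i, e 0, e 1] := by
      rw [hb i, smul_smul, inv_mul_cancel₀ hci, one_smul]
    rw [heq]
    exact Submodule.smul_mem _ _ hmem
  · intro B hB
    set tb : Module.Basis (Fin 3 × Fin 3) K (L ⊗[K] L) := Module.Basis.tensorProduct e e with htb
    set φ : L ⊗[K] L →ₗ[K] K := tb.coord (0, 1) with hφ
    have hφapp : ∀ p : Fin 3 × Fin 3, φ (tb p) = if p = ((0 : Fin 3), (1 : Fin 3)) then 1 else 0 := by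
      intro p
      rw [hφ, Module.Basis.coord_apply, Module.Basis.repr_self_apply]
    have key : ∀ i j k l : Fin 3, φ (B (e i ⊗ₜ[K] e j) (e k ⊗ₜ[K] e l)) = 0 := by
      intro i j k l
      rw [hB]
      by_cases h : k = 0 ∧ l = 1
      · obtain ⟨rfl, rfl⟩ := h
        rw [hb i, hb j, ← TensorProduct.smul_tmul', TensorProduct.tmul_smul,
          ← add_smul, map_smul]
        have : e i ⊗ₜ[K] e j = tb (i, j) := (Module.Basis.tensorProduct_apply e e i j).symm
        rw [this, hφapp]
        by_cases hij : ((i : Fin 3), (j : Fin 3)) = ((0 : Fin 3), (1 : Fin 3))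
        · rw [if_pos hij]
          obtain ⟨rfl, rfl⟩ : i = 0 ∧ j = 1 := Prod.mk.injEq .. ▸ hij
          simp
        · rw [if_neg hij, smul_zero]
      · rw [hzero i k l h, hzero j k l h, TensorProduct.zero_tmul,
          TensorProduct.tmul_zero, add_zero, map_zero]
    have hφ01 : φ (e 0 ⊗ₜ[K] e 1) = 1 := by
      have : e 0 ⊗ₜ[K] e 1 = tb (0, 1) := (Module.Basis.tensorProduct_apply e e 0 1).symm
      rw [this, hφapp, if_pos rfl]
    constructor
    · intro hmem
      have hle : Submodule.span K
          {t : L ⊗[K] L | ∃ i j k l : Fin 3, t = B (e i ⊗ₜ[K] e j) (e k ⊗ₜ[K] e l)} ≤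
          LinearMap.ker φ := by
        apply Submodule.span_le.2
        rintro t ⟨i, j, k, l, rfl⟩
        exact key i j k l
      have := hle hmem
      rw [LinearMap.mem_ker, hφ01] at this
      exact one_ne_zero this
    · have hC : LinearMap.compr₂ B φ = 0 := by
        apply tb.ext; intro p
        apply tb.ext; intro q
        obtain ⟨i, j⟩ := p
        obtain ⟨k, l⟩ := q
        rw [htb, Module.Basis.tensorProduct_apply, Module.Basis.tensorProduct_apply]
        simpa using key i j k l
      intro htop
      have hle : Submodule.span K {t : L ⊗[K] L | ∃ u v, t = B u v} ≤ LinearMap.ker φ := by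
        apply Submodule.span_le.2
        rintro t ⟨u, v, rfl⟩
        have := LinearMap.congr_fun (LinearMap.congr_fun hC u) v
        simpa [LinearMap.compr₂_apply] using this
      have : e 0 ⊗ₜ[K] e 1 ∈ LinearMap.ker φ := hle (htop ▸ Submodule.mem_top)
      rw [LinearMap.mem_ker, hφ01] at this
      exact one_ne_zero this
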